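/- Deep-learning K-prior gradient decomposition: for a differentiable (possibly nonlinear) model f_w, the gradient of K(w) = Σ_{i∈D}[−h(f_{w*}^i) f_w^i + A(f_w^i)] + (δ/2)‖w − w*‖² equals ∇ℓ̄(w) − ( Σ_{i∈D} ∇f_w^i r_{w*}^i + δ w* ), where ℓ̄(w) = Σ_{i∈D}[−y_i f_w^i + A(f_w^i)] + (δ/2)‖w‖² and r_{w*}^i = h(f_{w*}^i) − y_i. -/

import Mathlib

set_option maxHeartbeats 1000000

open RealInnerProductSpace

section Helpers

variable {F : Type*} [NormedAddCommGroup F] [InnerProductSpace ℝ F] [CompleteSpace F]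

private lemma grad_add {f g : F → ℝ} {f' g' x : F}
    (hf : HasGradientAt f f' x) (hg : HasGradientAt g g' x) :
    HasGradientAt (fun x => f x + g x) (f' + g') x := by
  rw [hasGradientAt_iff_hasFDerivAt] at *
  rw [map_add]; exact hf.add hg

private lemma grad_const_mul {f : F → ℝ} {f' x : F} (c : ℝ)
    (hf : HasGradientAt f f' x) :
    HasGradientAt (fun x => c * f x) (c • f') x := by
  rw [hasGradientAt_iff_hasFDerivAt] at *
  have := hf.const_smul c
  rw [map_smul]; exact this

private lemma grad_sum {ι : Type*} (D : Finset ι) {f : ι → F → ℝ} {f' : ι → F} {x : F}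
    (hf : ∀ i ∈ D, HasGradientAt (f i) (f' i) x) :
    HasGradientAt (fun x => ∑ i ∈ D, f i x) (∑ i ∈ D, f' i) x := by
  classical
  induction D using Finset.induction with
  | empty => simpa using hasGradientAt_const x (0 : ℝ)
  | insert _ _ hnot ih =>
    rename_i a s
    simp only [Finset.sum_insert hnot]
    exact grad_add (hf a (Finset.mem_insert_self a s))
      (ih fun i hi => hf i (Finset.mem_insert_of_mem hi))

private lemma grad_inner_right (v x : F) :
    HasGradientAt (fun w => ⟪w, v⟫) v x := by
  have h1 : HasFDerivAt (fun w : F => ⟪v, w⟫)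
      ((InnerProductSpace.toDual ℝ F) v) x :=
    ((InnerProductSpace.toDual ℝ F) v).hasFDerivAt
  have h2 : (fun w : F => ⟪v, w⟫) = fun w : F => ⟪w, v⟫ := by
    funext w; exact real_inner_comm w v
  rw [hasGradientAt_iff_hasFDerivAt]
  rw [h2] at h1
  exact h1

end Helpers

/-- Deep-learning K-prior gradient decomposition: for a differentiable (possibly
nonlinear) model `f_w`, the gradient of
`K(w) = Σ_i [−h(f_{w*}^i) f_w^i + A(f_w^i)] + (δ/2)‖w − w*‖²` equals
`∇ℓ̄(w) − (Σ_i (h(f_{w*}^i) − y_i) • ∇f_w^i + δ w*)`, where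
`ℓ̄(w) = Σ_i [−y_i f_w^i + A(f_w^i)] + (δ/2)‖w‖²`. -/
theorem stmt9 {P : ℕ} {ι : Type*} (D : Finset ι)
    (A h : ℝ → ℝ) (hA : ∀ x, HasDerivAt A (h x) x)
    (f : EuclideanSpace ℝ (Fin P) → ι → ℝ)
    (gf : ι → EuclideanSpace ℝ (Fin P) → EuclideanSpace ℝ (Fin P))
    (hf : ∀ i w, HasGradientAt (fun w => f w i) (gf i w) w)
    (y : ι → ℝ) (δ : ℝ) (hδ : 0 ≤ δ)
    (wstar w : EuclideanSpace ℝ (Fin P))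
    (gL : EuclideanSpace ℝ (Fin P))
    (hL : HasGradientAt
      (fun w => ∑ i ∈ D, (-(y i) * f w i + A (f w i)) + (δ / 2) * ‖w‖ ^ 2) gL w) :
    HasGradientAt
      (fun w => ∑ i ∈ D, (-(h (f wstar i)) * f w i + A (f w i))
        + (δ / 2) * ‖w - wstar‖ ^ 2)
      (gL - (∑ i ∈ D, (h (f wstar i) - y i) • gf i w + δ • wstar)) w := by
  -- correction term
  have hg : HasGradientAt
      (fun w : EuclideanSpace ℝ (Fin P) => ∑ i ∈ D, ((y i - h (f wstar i)) * f w i)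
        + ((-δ) * ⟪w, wstar⟫ + (δ / 2) * ‖wstar‖ ^ 2))
      ((∑ i ∈ D, (y i - h (f wstar i)) • gf i w) + ((-δ) • wstar + 0)) w := by
    apply grad_add
    · exact grad_sum D fun i _ => grad_const_mul _ (hf i w)
    · exact grad_add (grad_const_mul (-δ) (grad_inner_right wstar w))
        (by simpa using hasGradientAt_const w ((δ / 2) * ‖wstar‖ ^ 2))
  have hsum := grad_add hL hg
  have hfun : (fun w : EuclideanSpace ℝ (Fin P) => (∑ i ∈ D, (-(y i) * f w i + A (f w i)) + (δ / 2) * ‖w‖ ^ 2)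
      + (∑ i ∈ D, ((y i - h (f wstar i)) * f w i)
        + ((-δ) * ⟪w, wstar⟫ + (δ / 2) * ‖wstar‖ ^ 2)))
      = fun w : EuclideanSpace ℝ (Fin P) => ∑ i ∈ D, (-(h (f wstar i)) * f w i + A (f w i))
        + (δ / 2) * ‖w - wstar‖ ^ 2 := by
    funext v
    have hnorm : ‖v - wstar‖ ^ 2 = ‖v‖ ^ 2 - 2 * ⟪v, wstar⟫ + ‖wstar‖ ^ 2 :=
      @norm_sub_sq_real (EuclideanSpace ℝ (Fin P)) _ _ v wstar
    have hsum2 : ∑ i ∈ D, (-(y i) * f v i + A (f v i))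
        + ∑ i ∈ D, ((y i - h (f wstar i)) * f v i)
        = ∑ i ∈ D, (-(h (f wstar i)) * f v i + A (f v i)) := by
      rw [← Finset.sum_add_distrib]
      exact Finset.sum_congr rfl fun i _ => by ring
    rw [hnorm]
    linear_combination hsum2
  have hvec : gL + ((∑ i ∈ D, (y i - h (f wstar i)) • gf i w) + ((-δ) • wstar + 0))
      = gL - (∑ i ∈ D, (h (f wstar i) - y i) • gf i w + δ • wstar) := by
    have : (∑ i ∈ D, (y i - h (f wstar i)) • gf i w)
        = -∑ i ∈ D, (h (f wstar i) - y i) • gf i w := by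
      rw [← Finset.sum_neg_distrib]
      apply Finset.sum_congr rfl
      intro i _
      rw [← neg_smul]; ring_nf
    rw [this]
    module
  rw [hfun, hvec] at hsum
  exact hsum
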